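/- The vector-function f = (f₀, f₁) with f₀ a nonzero constant and f₁(q) = -μ f₀ / (ε(q/2) + ε(q)) satisfies f₁ ∈ L¹(T³) but f₁ ∉ L²(T³). -/

import Mathlib

open MeasureTheory Real Filter

noncomputable def eps (k : EuclideanSpace ℝ (Fin 3)) : ℝ := ∑ i, (1 - Real.cos (k i))

noncomputable def w1 (k p : EuclideanSpace ℝ (Fin 3)) : ℝ :=
  eps k + eps ((1 / 2 : ℝ) • (k + p)) + eps p

def T3 : Set (EuclideanSpace ℝ (Fin 3)) := {k | ∀ i, k i ∈ Set.Ioc (-Real.pi) Real.pi}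

noncomputable def pibar : EuclideanSpace ℝ (Fin 3) := WithLp.toLp 2 (fun _ => Real.pi)

/- ### Auxiliary lemmas -/

lemma eps_nonneg (k : EuclideanSpace ℝ (Fin 3)) : 0 ≤ eps k :=
  Finset.sum_nonneg fun i _ => by linarith [Real.cos_le_one (k i)]

lemma eps_lower (k : EuclideanSpace ℝ (Fin 3)) (hk : ∀ i, |k i| ≤ π) :
    2 / π ^ 2 * ∑ i, (k i) ^ 2 ≤ eps k := by
  rw [Finset.mul_sum]
  exact Finset.sum_le_sum fun i _ => by
    have := Real.cos_le_one_sub_mul_cos_sq (hk i); linarith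

lemma eps_upper (k : EuclideanSpace ℝ (Fin 3)) : eps k ≤ (1/2) * ∑ i, (k i) ^ 2 := by
  rw [Finset.mul_sum]
  exact Finset.sum_le_sum fun i _ => by
    have := Real.one_sub_sq_div_two_le_cos (x := k i); linarith

lemma smul_apply' (c : ℝ) (q : EuclideanSpace ℝ (Fin 3)) (i : Fin 3) : (c • q) i = c * q i := rfl

lemma fin3_cases {P : Fin 3 → Prop} (h0 : P 0) (h1 : P 1) (h2 : P 2) : ∀ i, P i := by
  intro i
  fin_cases i
  · exact h0
  · exact h1
  · exact h2

lemma cont_eps : Continuous eps := by unfold eps; fun_prop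

lemma meas_f (μ : ℝ) (f₀ : ℂ) :
    Measurable (fun q : EuclideanSpace ℝ (Fin 3) =>
      -(↑μ * f₀) / ((eps ((1 / 2 : ℝ) • q) + eps q : ℝ) : ℂ)) := by
  apply Measurable.div measurable_const
  apply Complex.measurable_ofReal.comp
  exact ((cont_eps.comp (continuous_const_smul _)).add cont_eps).measurable

lemma norm_f (μ : ℝ) (hμ : 0 < μ) (f₀ : ℂ) (q : EuclideanSpace ℝ (Fin 3)) :
    ‖ -(↑μ * f₀) / ((eps ((1 / 2 : ℝ) • q) + eps q : ℝ) : ℂ)‖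
      = μ * ‖f₀‖ / (eps ((1 / 2 : ℝ) • q) + eps q) := by
  rw [norm_div, norm_neg, norm_mul, Complex.norm_real, Complex.norm_real,
    Real.norm_of_nonneg hμ.le,
    Real.norm_of_nonneg (add_nonneg (eps_nonneg _) (eps_nonneg _))]

lemma sum_sq_pos (q : EuclideanSpace ℝ (Fin 3)) (h : q 0 ≠ 0) : 0 < ∑ i, (q i) ^ 2 := by
  have h1 : (q 0)^2 ≤ ∑ i, (q i)^2 :=
    Finset.single_le_sum (fun i _ => sq_nonneg (q i)) (Finset.mem_univ 0)
  have h2 : 0 < (q 0)^2 := (sq_nonneg (q 0)).lt_of_ne (Ne.symm (pow_ne_zero 2 h))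
  linarith

lemma inv_sum_le (q : EuclideanSpace ℝ (Fin 3)) (hne : ∀ i, q i ≠ 0) :
    (∑ i, (q i) ^ 2)⁻¹ ≤ ∏ i, ((q i) ^ 2) ^ (-(1/3) : ℝ) := by
  set p : Fin 3 → ℝ := fun i => (q i) ^ 2 with hp
  have hppos : ∀ i, 0 < p i := fun i => by
    exact (sq_nonneg (q i)).lt_of_ne (Ne.symm (pow_ne_zero 2 (hne i)))
  have hgm := Real.geom_mean_le_arith_mean3_weighted (by norm_num : (0:ℝ) ≤ 1/3)
    (by norm_num : (0:ℝ) ≤ 1/3) (by norm_num : (0:ℝ) ≤ 1/3)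
    (hppos 0).le (hppos 1).le (hppos 2).le (by norm_num)
  have hS : ∑ i, (q i) ^ 2 = p 0 + p 1 + p 2 := Fin.sum_univ_three p
  have hP : ∏ i, ((q i) ^ 2) ^ (-(1/3) : ℝ)
      = (p 0 ^ ((1:ℝ)/3) * p 1 ^ ((1:ℝ)/3) * p 2 ^ ((1:ℝ)/3))⁻¹ := by
    rw [Fin.prod_univ_three (fun i => p i ^ (-(1/3):ℝ))]
    rw [Real.rpow_neg (hppos 0).le, Real.rpow_neg (hppos 1).le, Real.rpow_neg (hppos 2).le]
    rw [mul_inv, mul_inv]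
  have hPpos : 0 < p 0 ^ ((1:ℝ)/3) * p 1 ^ ((1:ℝ)/3) * p 2 ^ ((1:ℝ)/3) := by
    have := hppos 0; have := hppos 1; have := hppos 2; positivity
  rw [hS, hP]
  apply inv_anti₀ hPpos
  calc p 0 ^ ((1:ℝ)/3) * p 1 ^ ((1:ℝ)/3) * p 2 ^ ((1:ℝ)/3)
      ≤ 1/3 * p 0 + 1/3 * p 1 + 1/3 * p 2 := hgm
    _ ≤ p 0 + p 1 + p 2 := by nlinarith [hppos 0, hppos 1, hppos 2]

noncomputable def g1 (x : ℝ) : ℝ := (Set.Ioc (-π) π).indicator (fun x => (x ^ 2) ^ (-(1/3) : ℝ)) x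

lemma integrable_g1 : Integrable g1 := by
  unfold g1
  rw [integrable_indicator_iff measurableSet_Ioc]
  have hbase : IntegrableOn (fun x : ℝ => x ^ (-(2/3) : ℝ)) (Set.Ioc 0 π) := by
    rw [← intervalIntegrable_iff_integrableOn_Ioc_of_le Real.pi_pos.le]
    exact intervalIntegral.intervalIntegrable_rpow' (by norm_num)
  have hpos : IntegrableOn (fun x : ℝ => (x ^ 2) ^ (-(1/3) : ℝ)) (Set.Ioc 0 π) := by
    apply hbase.congr_fun ?_ measurableSet_Ioc
    intro x hx
    show x ^ (-(2/3) : ℝ) = ((x ^ 2 : ℝ)) ^ (-(1/3) : ℝ)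
    rw [← Real.rpow_natCast x 2, ← Real.rpow_mul hx.1.le]
    norm_num
  have h1 : IntervalIntegrable (fun x : ℝ => (x ^ 2) ^ (-(1/3) : ℝ)) volume 0 π := by
    rw [intervalIntegrable_iff_integrableOn_Ioc_of_le Real.pi_pos.le]; exact hpos
  have h2 : IntervalIntegrable (fun x : ℝ => (x ^ 2) ^ (-(1/3) : ℝ)) volume (-0) (-π) := by
    have := (IntervalIntegrable.iff_comp_neg
      (f := fun x : ℝ => (x ^ 2) ^ (-(1/3) : ℝ)) (a := 0) (b := π)).mp h1
    simpa [neg_sq] using this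
  have hneg : IntegrableOn (fun x : ℝ => (x ^ 2) ^ (-(1/3) : ℝ)) (Set.Ioc (-π) 0) := by
    have h3 := h2.symm
    rw [neg_zero] at h3
    rwa [intervalIntegrable_iff_integrableOn_Ioc_of_le (by linarith [Real.pi_pos])] at h3
  have : Set.Ioc (-π) π = Set.Ioc (-π) 0 ∪ Set.Ioc 0 π := by
    rw [Set.Ioc_union_Ioc_eq_Ioc (by linarith [Real.pi_pos]) Real.pi_pos.le]
  rw [this]
  exact hneg.union hpos

lemma integrable_G : Integrable (fun q : EuclideanSpace ℝ (Fin 3) => ∏ i, g1 (q i)) := by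
  have hpi : Integrable (fun x : Fin 3 → ℝ => ∏ i, g1 (x i)) :=
    Integrable.fintype_prod (𝕜 := ℝ) (fun _ => integrable_g1)
  have hmp := EuclideanSpace.volume_preserving_symm_measurableEquiv_toLp (Fin 3)
  exact (hmp.integrable_comp_emb
    ((MeasurableEquiv.toLp 2 (Fin 3 → ℝ)).symm).measurableEmbedding).mpr hpi

lemma null_coord (i : Fin 3) :
    (volume : Measure (EuclideanSpace ℝ (Fin 3))) {q | q i = 0} = 0 := by
  have hmp := EuclideanSpace.volume_preserving_symm_measurableEquiv_toLp (Fin 3)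
  have h : {q : EuclideanSpace ℝ (Fin 3) | q i = 0}
      = ((MeasurableEquiv.toLp 2 (Fin 3 → ℝ)).symm) ⁻¹' {x : Fin 3 → ℝ | x i = 0} := rfl
  rw [h, hmp.measure_preimage]
  · exact Measure.pi_hyperplane _ i 0
  · exact (MeasurableSet.preimage (measurableSet_singleton 0)
      (measurable_pi_apply i)).nullMeasurableSet

lemma meas_T3 : MeasurableSet T3 := by
  have : T3 = ⋂ i, (fun q : EuclideanSpace ℝ (Fin 3) => q i) ⁻¹' Set.Ioc (-π) π := by
    ext q; simp [T3, Set.mem_iInter]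
  rw [this]
  exact MeasurableSet.iInter fun i =>
    (measurableSet_Ioc.preimage (by fun_prop))

/- ### Key pointwise bounds -/

lemma norm_f_le (μ : ℝ) (hμ : 0 < μ) (f₀ : ℂ) (q : EuclideanSpace ℝ (Fin 3))
    (hq : q ∈ T3) (hne : ∀ i, q i ≠ 0) :
    ‖ -(↑μ * f₀) / ((eps ((1 / 2 : ℝ) • q) + eps q : ℝ) : ℂ)‖
      ≤ (π ^ 2 / 2 * (μ * ‖f₀‖)) * ∏ i, g1 (q i) := by
  set S := ∑ i, (q i) ^ 2 with hSdef
  have hSpos : 0 < S := sum_sq_pos q (hne 0)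
  have habs : ∀ i, |q i| ≤ π := fun i => abs_le.mpr ⟨(hq i).1.le, (hq i).2⟩
  have hD : 2 / π ^ 2 * S ≤ eps ((1 / 2 : ℝ) • q) + eps q := by
    have := eps_lower q habs
    have := eps_nonneg ((1 / 2 : ℝ) • q)
    linarith
  have hcpos : (0:ℝ) < 2 / π ^ 2 := by positivity
  have hDpos : 0 < eps ((1 / 2 : ℝ) • q) + eps q := lt_of_lt_of_le (by positivity) hD
  rw [norm_f μ hμ f₀ q]
  have hprod : ∏ i, g1 (q i) = ∏ i, ((q i) ^ 2) ^ (-(1/3) : ℝ) := by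
    apply Finset.prod_congr rfl
    intro i _
    exact Set.indicator_of_mem (hq i) _
  rw [hprod]
  calc μ * ‖f₀‖ / (eps ((1 / 2 : ℝ) • q) + eps q)
      ≤ μ * ‖f₀‖ / (2 / π ^ 2 * S) := by
        apply div_le_div_of_nonneg_left (by positivity) (by positivity) hD
    _ = (π ^ 2 / 2 * (μ * ‖f₀‖)) * S⁻¹ := by
        field_simp
    _ ≤ (π ^ 2 / 2 * (μ * ‖f₀‖)) * ∏ i, ((q i) ^ 2) ^ (-(1/3) : ℝ) := by
        apply mul_le_mul_of_nonneg_left (inv_sum_le q hne) (by positivity)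

lemma norm_f_ge (μ : ℝ) (hμ : 0 < μ) (f₀ : ℂ) (q : EuclideanSpace ℝ (Fin 3)) (a : ℝ)
    (ha : 0 < a) (ha1 : a ≤ 1) (h0 : q 0 ≠ 0) (hb : ∀ i, 0 ≤ q i ∧ q i ≤ a) :
    μ * ‖f₀‖ / (3 * a ^ 2)
      ≤ ‖ -(↑μ * f₀) / ((eps ((1 / 2 : ℝ) • q) + eps q : ℝ) : ℂ)‖ := by
  have hS3 : ∑ i, (q i) ^ 2 ≤ 3 * a ^ 2 := by
    have : ∀ i, (q i)^2 ≤ a^2 := fun i =>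
      pow_le_pow_left₀ (hb i).1 (hb i).2 2
    calc ∑ i, (q i) ^ 2 ≤ ∑ _i : Fin 3, a ^ 2 :=
          Finset.sum_le_sum fun i _ => this i
      _ = 3 * a ^ 2 := by
          rw [Finset.sum_const, Finset.card_univ]
          simp
  have hhalf : ∑ i, (((1/2 : ℝ) • q) i) ^ 2 = (1/4) * ∑ i, (q i) ^ 2 := by
    rw [Finset.mul_sum]
    apply Finset.sum_congr rfl
    intro i _
    rw [smul_apply']
    ring
  have hupper : eps ((1 / 2 : ℝ) • q) + eps q ≤ 3 * a ^ 2 := by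
    have h1 := eps_upper ((1 / 2 : ℝ) • q)
    have h2 := eps_upper q
    rw [hhalf] at h1
    have hSnn : (0:ℝ) ≤ ∑ i, (q i) ^ 2 := Finset.sum_nonneg fun i _ => sq_nonneg _
    linarith
  have hSpos : 0 < ∑ i, (q i) ^ 2 := sum_sq_pos q h0
  have habs : ∀ i, |q i| ≤ π := fun i => by
    rw [abs_of_nonneg (hb i).1]
    linarith [(hb i).2, Real.pi_gt_three]
  have hDpos : 0 < eps ((1 / 2 : ℝ) • q) + eps q := by
    have h1 := eps_lower q habs
    have h2 := eps_nonneg ((1 / 2 : ℝ) • q)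
    have : (0:ℝ) < 2 / π ^ 2 * ∑ i, (q i) ^ 2 := by positivity
    linarith
  rw [norm_f μ hμ f₀ q]
  apply div_le_div_of_nonneg_left (by positivity) hDpos hupper

/- ### Main theorem -/

theorem stmt6 (μ : ℝ) (hμ : 0 < μ) (f₀ : ℂ) (hf₀ : f₀ ≠ 0) :
    MeasureTheory.Integrable
      (fun q : EuclideanSpace ℝ (Fin 3) =>
        -(↑μ * f₀) / ((eps ((1 / 2 : ℝ) • q) + eps q : ℝ) : ℂ))
      (MeasureTheory.volume.restrict T3) ∧
    ¬ MeasureTheory.MemLp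
      (fun q : EuclideanSpace ℝ (Fin 3) =>
        -(↑μ * f₀) / ((eps ((1 / 2 : ℝ) • q) + eps q : ℝ) : ℂ))
      2 (MeasureTheory.volume.restrict T3) := by
  set f : EuclideanSpace ℝ (Fin 3) → ℂ := fun q =>
    -(↑μ * f₀) / ((eps ((1 / 2 : ℝ) • q) + eps q : ℝ) : ℂ) with hfdef
  have hne_ae : ∀ᵐ q : EuclideanSpace ℝ (Fin 3) ∂volume, ∀ i, q i ≠ 0 := by
    rw [ae_all_iff]
    intro i
    apply ae_iff.mpr
    simpa using null_coord i
  constructor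
  · -- Integrability
    apply Integrable.mono'
      ((integrable_G.const_mul (π ^ 2 / 2 * (μ * ‖f₀‖))).restrict (s := T3))
      ((meas_f μ f₀).aestronglyMeasurable)
    filter_upwards [ae_restrict_mem meas_T3, ae_restrict_of_ae hne_ae] with q hq hne
    exact norm_f_le μ hμ f₀ q hq hne
  · -- Not in L²
    intro hmem
    have hsm : AEStronglyMeasurable f (volume.restrict T3) :=
      (meas_f μ f₀).aestronglyMeasurable
    have I2 : Integrable (fun q => ‖f q‖ ^ 2) (volume.restrict T3) :=
      (memLp_two_iff_integrable_sq_norm hsm).mp hmem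
    set c : ℝ := μ * ‖f₀‖ with hcdef
    have hc : 0 < c := by
      have : 0 < ‖f₀‖ := norm_pos_iff.mpr hf₀
      positivity
    set I : ℝ := ∫ q in T3, ‖f q‖ ^ 2 with hIdef
    have hInn : 0 ≤ I := integral_nonneg fun q => sq_nonneg _
    -- key: for all n, (c^2/72) * 2^n ≤ I
    have key : ∀ n : ℕ, c ^ 2 / 72 * 2 ^ n ≤ I := by
      intro n
      set a : ℝ := (1/2 : ℝ) ^ n with hadef
      have hapos : 0 < a := by positivity
      have ha1 : a ≤ 1 := pow_le_one₀ (by norm_num) (by norm_num)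
      set B : Set (EuclideanSpace ℝ (Fin 3)) :=
        ((MeasurableEquiv.toLp 2 (Fin 3 → ℝ)).symm) ⁻¹'
          (Set.univ.pi fun i => if i = 0 then Set.Ioc (a/2) a else Set.Ioc 0 (a/2)) with hBdef
      have hmemB : ∀ q : EuclideanSpace ℝ (Fin 3), q ∈ B ↔
          (q 0 ∈ Set.Ioc (a/2) a ∧ q 1 ∈ Set.Ioc 0 (a/2) ∧ q 2 ∈ Set.Ioc 0 (a/2)) := by
        intro q
        constructor
        · intro h
          exact ⟨by simpa using h 0 (Set.mem_univ 0), by simpa using h 1 (Set.mem_univ 1),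
            by simpa using h 2 (Set.mem_univ 2)⟩
        · rintro ⟨h0, h1, h2⟩
          refine fun i _ => ?_
          revert i
          refine fin3_cases ?_ ?_ ?_
          · simpa using h0
          · simpa using h1
          · simpa using h2
      have hBmeas : MeasurableSet B := by
        apply MeasurableSet.preimage
        · exact MeasurableSet.univ_pi fun i => by split <;> exact measurableSet_Ioc
        · exact ((MeasurableEquiv.toLp 2 (Fin 3 → ℝ)).symm).measurable
      have hBsub : B ⊆ T3 := by
        intro q hq
        rw [hmemB] at hq
        obtain ⟨h0, h1, h2⟩ := hq
        have hpi3 := Real.pi_gt_three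
        refine fin3_cases ?_ ?_ ?_
        · exact ⟨by nlinarith [h0.1, hapos], by nlinarith [h0.2]⟩
        · exact ⟨by nlinarith [h1.1], by nlinarith [h1.2]⟩
        · exact ⟨by nlinarith [h2.1], by nlinarith [h2.2]⟩
      have hvolB : volume B = ENNReal.ofReal (a/2) * (ENNReal.ofReal (a/2)
          * ENNReal.ofReal (a/2)) := by
        rw [hBdef, (EuclideanSpace.volume_preserving_symm_measurableEquiv_toLp (Fin 3)).measure_preimage
          ((MeasurableSet.univ_pi fun i => by
            split <;> exact measurableSet_Ioc).nullMeasurableSet)]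
        rw [volume_pi_pi, Fin.prod_univ_three]
        rw [if_pos rfl, if_neg (by decide : ¬(1:Fin 3) = 0), if_neg (by decide : ¬(2:Fin 3) = 0)]
        simp only [Real.volume_Ioc, sub_zero]
        rw [show a - a / 2 = a / 2 by ring]
        ring
      have hvolBR : (volume B).toReal = (a/2) ^ 3 := by
        rw [hvolB, ENNReal.toReal_mul, ENNReal.toReal_mul,
          ENNReal.toReal_ofReal (by positivity)]
        ring
      have hvolBne : volume B ≠ ⊤ := by
        rw [hvolB]
        exact ENNReal.mul_ne_top ENNReal.ofReal_ne_top
          (ENNReal.mul_ne_top ENNReal.ofReal_ne_top ENNReal.ofReal_ne_top)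
      have hIT : IntegrableOn (fun q => ‖f q‖ ^ 2) T3 volume := I2
      have hIB : IntegrableOn (fun q => ‖f q‖ ^ 2) B volume := hIT.mono_set hBsub
      -- pointwise lower bound on B
      have hlow : ∀ q ∈ B, (c / (3 * a ^ 2)) ^ 2 ≤ ‖f q‖ ^ 2 := by
        intro q hq
        rw [hmemB] at hq
        obtain ⟨h0, h1, h2⟩ := hq
        have hb : ∀ i, 0 ≤ q i ∧ q i ≤ a := by
          refine fin3_cases ?_ ?_ ?_
          · exact ⟨by nlinarith [h0.1, hapos], h0.2⟩
          · exact ⟨h1.1.le, by nlinarith [h1.2]⟩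
          · exact ⟨h2.1.le, by nlinarith [h2.2]⟩
        have h0ne : q 0 ≠ 0 := by
          have := h0.1; intro h; rw [h] at this; nlinarith
        have := norm_f_ge μ hμ f₀ q a hapos ha1 h0ne hb
        have hnn : (0:ℝ) ≤ c / (3 * a ^ 2) := by positivity
        exact pow_le_pow_left₀ hnn this 2
      have step1 : (c / (3 * a ^ 2)) ^ 2 * (volume B).toReal ≤ ∫ q in B, ‖f q‖ ^ 2 :=
        setIntegral_ge_of_const_le_real hBmeas hvolBne hlow hIB
      have step2 : (∫ q in B, ‖f q‖ ^ 2) ≤ I := by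
        apply setIntegral_mono_set hIT
          (Eventually.of_forall fun q => sq_nonneg _)
          (HasSubset.Subset.eventuallyLE hBsub)
      have harith : c ^ 2 / 72 * 2 ^ n = (c / (3 * a ^ 2)) ^ 2 * (a/2) ^ 3 := by
        have h2n : (2:ℝ) ^ n = a⁻¹ := by
          rw [hadef, ← inv_pow]
          norm_num
        rw [h2n]
        field_simp
        ring
      rw [harith, ← hvolBR]
      exact le_trans step1 step2
    -- contradiction
    obtain ⟨n, hn⟩ := pow_unbounded_of_one_lt (72 / c ^ 2 * I) (by norm_num : (1:ℝ) < 2)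
    have hc2 : (0:ℝ) < c ^ 2 / 72 := by positivity
    have h1 : c ^ 2 / 72 * (72 / c ^ 2 * I) = I := by field_simp
    have h2 := mul_lt_mul_of_pos_left hn hc2
    linarith [key n]
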